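/- Let K/F be a Galois extension of number fields of degree n, σ ∈ Gal(K/F), δ an F-linear left σ-derivation on K with δ(O_K) ⊆ O_K, and f ∈ O_K[t;σ,δ] monic of degree m ≥ 2. Let Λ = O_K[t;σ,δ]/O_K[t;σ,δ]f be the natural order and I an ideal of O_F. Then I·Λ = {Σ_{i=0}^{m-1} aᵢtⁱ : aᵢ ∈ I·O_K} and the reduction map g ↦ ḡ induces an isomorphism of nonassociative unital O_F/I-algebras Λ/(I·Λ) ≅ (O_K/I·O_K)[t;σ̄,δ̄]/(O_K/I·O_K)[t;σ̄,δ̄]f̄. -/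

import Mathlib

/-- An abstract presentation of the skew polynomial ring `S[t;σ,δ]`:
a ring `R` together with an embedding of `S`, a variable `t` satisfying the
commutation rule `t·a = σ(a)·t + δ(a)`, such that the `t^i` form a basis of `R`
as a left `S`-module (encoded by the coefficient equivalence). -/
structure SkewPolyRing (S : Type*) (R : Type*) [Ring S] [Ring R]
    (σ : S →+* S) (δ : S →+ S) : Type _ where
  ι : S →+* R
  t : R
  t_comm : ∀ a : S, t * ι a = ι (σ a) * t + ι (δ a)
  coeff : R ≃+ (ℕ →₀ S)
  coeff_symm : ∀ p : ℕ →₀ S, coeff.symm p = p.sum fun i a => ι a * t ^ i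

namespace SkewPolyRing

variable {S R : Type*} [Ring S] [Ring R] {σ : S →+* S} {δ : S →+ S}

/-- `g` has degree `< m`. -/
def degLT (P : SkewPolyRing S R σ δ) (g : R) (m : ℕ) : Prop :=
  ∀ i, m ≤ i → P.coeff g i = 0

/-- The degree of a skew polynomial (with `deg 0 = 0` by convention). -/
noncomputable def deg (P : SkewPolyRing S R σ δ) (g : R) : ℕ :=
  (P.coeff g).support.sup id

/-- `f` is monic of degree `m`. -/
def MonicDeg (P : SkewPolyRing S R σ δ) (f : R) (m : ℕ) : Prop :=
  P.coeff f m = 1 ∧ ∀ i, m < i → P.coeff f i = 0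

/-- `modr` computes a remainder of right division by `f`. -/
def IsModr (P : SkewPolyRing S R σ δ) (f : R) (m : ℕ) (modr : R → R) : Prop :=
  ∀ g : R, P.degLT (modr g) m ∧ ∃ q : R, g = q * f + modr g

end SkewPolyRing

namespace SkewPolyRing

variable {S R : Type*} [Ring S] [Ring R] {σ : S →+* S} {δ : S →+ S}

variable (P : SkewPolyRing S R σ δ)

lemma symm_single (i : ℕ) (a : S) :
    P.coeff.symm (Finsupp.single i a) = P.ι a * P.t ^ i := by
  rw [P.coeff_symm, Finsupp.sum_single_index]; simp

lemma coeff_monomial (i : ℕ) (a : S) :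
    P.coeff (P.ι a * P.t ^ i) = Finsupp.single i a := by
  rw [← P.symm_single, AddEquiv.apply_symm_apply]

lemma decomp (g : R) : g = (P.coeff g).sum fun i a => P.ι a * P.t ^ i := by
  conv_lhs => rw [← P.coeff.symm_apply_apply g]
  rw [P.coeff_symm]

lemma basis_induction {p : R → Prop} (h0 : p 0)
    (hadd : ∀ x y, p x → p y → p (x + y)) (hb : ∀ a i, p (P.ι a * P.t ^ i)) (g : R) :
    p g := by
  have h := P.decomp g
  rw [Finsupp.sum] at h
  rw [h]
  exact Finset.sum_induction _ p hadd h0 (fun i _ => hb _ _)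

lemma degLT_zero (m : ℕ) : P.degLT 0 m := fun i _ => by simp

lemma degLT_add {x y : R} {m : ℕ} (hx : P.degLT x m) (hy : P.degLT y m) :
    P.degLT (x + y) m := fun i hi => by
  rw [map_add, Finsupp.add_apply, hx i hi, hy i hi, add_zero]

lemma degLT_neg {x : R} {m : ℕ} (hx : P.degLT x m) : P.degLT (-x) m := fun i hi => by
  rw [map_neg, Finsupp.neg_apply, hx i hi, neg_zero]

lemma degLT_sub {x y : R} {m : ℕ} (hx : P.degLT x m) (hy : P.degLT y m) :
    P.degLT (x - y) m := by
  rw [sub_eq_add_neg]; exact P.degLT_add hx (P.degLT_neg hy)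

lemma degLT_mono {g : R} {m m' : ℕ} (h : m ≤ m') (hg : P.degLT g m) : P.degLT g m' :=
  fun i hi => hg i (le_trans h hi)

lemma degLT_sum {ι : Type*} (s : Finset ι) (h : ι → R) (m : ℕ)
    (hh : ∀ i ∈ s, P.degLT (h i) m) : P.degLT (∑ i ∈ s, h i) m := by
  intro n hn
  rw [map_sum, Finsupp.finset_sum_apply]
  exact Finset.sum_eq_zero fun i hi => hh i hi n hn

lemma coeff_ι_mul (a : S) (y : R) (n : ℕ) :
    P.coeff (P.ι a * y) n = a * P.coeff y n := by
  induction y using P.basis_induction with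
  | h0 => simp
  | hadd x y hx hy => simp only [mul_add, map_add, Finsupp.add_apply, hx, hy]
  | hb b j =>
    rw [← mul_assoc, ← map_mul, P.coeff_monomial, P.coeff_monomial,
      Finsupp.single_apply, Finsupp.single_apply, mul_ite, mul_zero]

lemma degLT_ι_mul (a : S) {y : R} {k : ℕ} (hy : P.degLT y k) :
    P.degLT (P.ι a * y) k := fun n hn => by
  rw [P.coeff_ι_mul, hy n hn, mul_zero]

lemma coeff_mul_tpow (z : R) (j i : ℕ) :
    P.coeff (z * P.t ^ j) (i + j) = P.coeff z i := by
  induction z using P.basis_induction with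
  | h0 => simp
  | hadd x y hx hy => simp only [add_mul, map_add, Finsupp.add_apply, hx, hy]
  | hb b l =>
    rw [mul_assoc, ← pow_add, P.coeff_monomial, P.coeff_monomial,
      Finsupp.single_apply, Finsupp.single_apply]
    simp [Nat.add_right_cancel_iff]

lemma degLT_mul_tpow {z : R} {k : ℕ} (j : ℕ) (hz : P.degLT z k) :
    P.degLT (z * P.t ^ j) (k + j) := by
  intro n hn
  obtain ⟨i, rfl⟩ : ∃ i, n = i + j := ⟨n - j, by omega⟩
  rw [P.coeff_mul_tpow]
  exact hz i (by omega)

lemma degLT_tpow_ι (i : ℕ) (b : S) : P.degLT (P.t ^ i * P.ι b) (i + 1) := by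
  induction i generalizing b with
  | zero =>
    intro n hn
    have : P.ι b = P.ι b * P.t ^ 0 := by simp
    rw [pow_zero, one_mul, this, P.coeff_monomial, Finsupp.single_apply,
      if_neg (by omega)]
  | succ i ih =>
    have h1 : P.t ^ (i + 1) * P.ι b
        = (P.t ^ i * P.ι (σ b)) * P.t ^ 1 + P.t ^ i * P.ι (δ b) := by
      rw [pow_succ, mul_assoc, P.t_comm, mul_add, pow_one, mul_assoc]
    rw [h1]
    exact P.degLT_add (P.degLT_mul_tpow 1 (ih (σ b)))
      (P.degLT_mono (by omega) (ih (δ b)))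

lemma degLT_mul {x y : R} {a b : ℕ} (hx : P.degLT x (a + 1)) (hy : P.degLT y (b + 1)) :
    P.degLT (x * y) (a + b + 1) := by
  have key : ∀ (c : S) (i : ℕ), i ≤ a → P.degLT ((P.ι c * P.t ^ i) * y) (a + b + 1) := by
    intro c i hia
    conv_lhs => rw [P.decomp y, Finsupp.mul_sum, Finsupp.sum]
    apply P.degLT_sum
    intro j hj
    have hjb : j ≤ b := by
      by_contra hjb
      exact (Finsupp.mem_support_iff.mp hj) (hy j (by omega))
    have h1 : (P.ι c * P.t ^ i) * (P.ι ((P.coeff y) j) * P.t ^ j)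
        = P.ι c * ((P.t ^ i * P.ι ((P.coeff y) j)) * P.t ^ j) := by
      rw [mul_assoc, mul_assoc]
    rw [h1]
    exact P.degLT_mono (by omega)
      (P.degLT_ι_mul c (P.degLT_mul_tpow j (P.degLT_tpow_ι i _)))
  conv_lhs => rw [P.decomp x, Finsupp.sum_mul, Finsupp.sum]
  apply P.degLT_sum
  intro i hi
  have hia : i ≤ a := by
    by_contra hia
    exact (Finsupp.mem_support_iff.mp hi) (hx i (by omega))
  exact key _ i hia

lemma mul_monic_eq_zero {f u : R} {m : ℕ} (hm : 1 ≤ m) (hf : P.MonicDeg f m)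
    (h : P.degLT (u * f) m) : u * f = 0 := by
  by_cases hu : u = 0
  · rw [hu, zero_mul]
  exfalso
  have hcu : P.coeff u ≠ 0 := fun h0 => hu (by
    have := congrArg P.coeff.symm h0
    rwa [AddEquiv.symm_apply_apply, map_zero] at this)
  have hne : (P.coeff u).support.Nonempty := Finsupp.support_nonempty_iff.mpr hcu
  set d := (P.coeff u).support.max' hne with hd
  have hdmem : d ∈ (P.coeff u).support := (P.coeff u).support.max'_mem hne
  have hcd : P.coeff u d ≠ 0 := Finsupp.mem_support_iff.mp hdmem
  have hu1 : P.degLT u (d + 1) := by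
    intro n hn
    by_contra hcn
    have := (P.coeff u).support.le_max' n (Finsupp.mem_support_iff.mpr hcn)
    omega
  set low := f - P.ι 1 * P.t ^ m with hlowdef
  have hlow : P.degLT low (m - 1 + 1) := by
    intro n hn
    rw [hlowdef, map_sub, Finsupp.sub_apply, P.coeff_monomial, Finsupp.single_apply]
    rcases eq_or_lt_of_le (show m ≤ n by omega) with h' | h'
    · rw [← h', hf.1, if_pos rfl, sub_self]
    · rw [hf.2 n h', if_neg (by omega), sub_zero]
  have hsplit : u * f = u * low + u * (P.ι 1 * P.t ^ m) := by
    rw [hlowdef, mul_sub, sub_add_cancel]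
  have h1 : P.coeff (u * low) (d + m) = 0 := by
    have := P.degLT_mul hu1 hlow
    exact this (d + m) (by omega)
  have h2 : P.coeff (u * (P.ι 1 * P.t ^ m)) (d + m) = P.coeff u d := by
    rw [map_one, one_mul, P.coeff_mul_tpow]
  have := h (d + m) (by omega)
  rw [hsplit] at this
  simp only [map_add, Finsupp.add_apply, h1, h2, zero_add] at this
  exact hcd this

lemma modr_eq_self {f : R} {m : ℕ} {modr : R → R} (hm : 1 ≤ m) (hf : P.MonicDeg f m)
    (hmodr : P.IsModr f m modr) {w : R} (hw : P.degLT w m) : modr w = w := by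
  obtain ⟨hdeg, q, hq⟩ := hmodr w
  have h1 : q * f = w - modr w := eq_sub_of_add_eq hq.symm
  have h2 : P.degLT (q * f) m := h1 ▸ P.degLT_sub hw hdeg
  have h3 := P.mul_monic_eq_zero hm hf h2
  exact (sub_eq_zero.mp (h1.symm.trans h3)).symm

end SkewPolyRing


open NumberField Finsupp

set_option synthInstance.maxHeartbeats 1000000 in
set_option maxHeartbeats 1000000 in
/-- Let `K/F` be a Galois extension of number fields of degree `n`, `σ ∈ Gal(K/F)`
(restricting to `σ₀` on `O_K`), `δ` an `F`-linear left `σ`-derivation on `K` with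
`δ(O_K) ⊆ O_K` (restricting to `δ₀`), and `f ∈ O_K[t;σ,δ]` monic of degree `m ≥ 2` with
natural order `Λ = O_K[t;σ,δ]/O_K[t;σ,δ]f` (the Petit algebra of `f` over `O_K`, with
product `g ∘ h = modr (g·h)`).  Let `I` be an ideal of `O_F` and `J = I·O_K`.  Then the
two-sided ideal `I·Λ` generated by `I` equals `{Σ_{i<m} aᵢtⁱ : aᵢ ∈ I·O_K}`, and
coefficientwise reduction `g ↦ ḡ` induces an isomorphism of unital nonassociative
`O_F/I`-algebras `Λ/(I·Λ) ≅ (O_K/I·O_K)[t;σ̄,δ̄]/(O_K/I·O_K)[t;σ̄,δ̄]f̄`: the reduction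
map is additive, unital, multiplicative for the Petit products, surjective onto the
reduced Petit algebra, and its kernel is `I·Λ`. -/
theorem natural_order_quotient_iso {F K R R' : Type*} [Field F] [Field K]
    [NumberField F] [NumberField K] [Algebra F K] [IsGalois F K] [Ring R] [Ring R']
    (n : ℕ) (hn : Module.finrank F K = n)
    (σ : K ≃ₐ[F] K) (σ₀ : 𝓞 K →+* 𝓞 K) (hσ₀ : ∀ x : 𝓞 K, (σ₀ x : K) = σ (x : K))
    (δ : K →+ K) (hδ : ∀ a b : K, δ (a * b) = σ a * δ b + δ a * b)
    (hδF : ∀ (c : F) (x : K), δ (algebraMap F K c * x) = algebraMap F K c * δ x)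
    (δ₀ : 𝓞 K →+ 𝓞 K) (hδ₀ : ∀ x : 𝓞 K, (δ₀ x : K) = δ (x : K))
    -- the natural order `Λ`, inside the skew polynomial ring `R = O_K[t;σ,δ]`:
    (P : SkewPolyRing (𝓞 K) R σ₀ δ₀) (f : R) (m : ℕ) (hm : 2 ≤ m)
    (hf : P.MonicDeg f m) (modr : R → R) (hmodr : P.IsModr f m modr)
    -- an ideal `I` of `O_F`, and `J = I·O_K`:
    (I : Ideal (𝓞 F)) (J : Ideal (𝓞 K)) (hJ : J = Ideal.map (algebraMap (𝓞 F) (𝓞 K)) I)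
    -- the induced maps `σ̄`, `δ̄` on `O_K/J` and the skew polynomial ring
    -- `R' = (O_K/J)[t;σ̄,δ̄]`:
    (σb : (𝓞 K ⧸ J) →+* (𝓞 K ⧸ J))
    (hσb : ∀ x : 𝓞 K, σb (Ideal.Quotient.mk J x) = Ideal.Quotient.mk J (σ₀ x))
    (δb : (𝓞 K ⧸ J) →+ (𝓞 K ⧸ J))
    (hδb : ∀ x : 𝓞 K, δb (Ideal.Quotient.mk J x) = Ideal.Quotient.mk J (δ₀ x))
    (P' : SkewPolyRing (𝓞 K ⧸ J) R' σb δb)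
    -- the reduction map `red : R → R'` and the reduced polynomial `f̄`:
    (red : R → R')
    (hred : ∀ g : R, red g = P'.coeff.symm
      (Finsupp.mapRange (Ideal.Quotient.mk J) (map_zero _) (P.coeff g)))
    (modr' : R' → R') (hmodr' : P'.IsModr (red f) m modr') :
    -- (1)  `I·Λ = {Σ_{i<m} aᵢ tⁱ : aᵢ ∈ I·O_K}`:
    (∀ g : R,
      (g ∈ AddSubgroup.closure {x : R | ∃ (a : 𝓞 F) (l : R), a ∈ I ∧ P.degLT l m ∧
          x = modr (P.ι (algebraMap (𝓞 F) (𝓞 K) a) * l)}) ↔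
      (P.degLT g m ∧ ∀ i, P.coeff g i ∈ J)) ∧
    -- (2)  `red` is additive and unital:
    (∀ g h : R, red (g + h) = red g + red h) ∧ red 1 = 1 ∧
    -- (3)  `red` is multiplicative for the Petit products:
    (∀ g h : R, P.degLT g m → P.degLT h m →
        red (modr (g * h)) = modr' (red g * red h)) ∧
    -- (4)  `red` maps `Λ` onto the reduced Petit algebra:
    (∀ g : R, P.degLT g m → P'.degLT (red g) m) ∧
    (∀ y : R', P'.degLT y m → ∃ g : R, P.degLT g m ∧ red g = y) ∧
    -- (5)  the kernel of `red` on `Λ` is `I·Λ`: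
    (∀ g : R, P.degLT g m → (red g = 0 ↔ ∀ i, P.coeff g i ∈ J)) := by
  have hm1 : 1 ≤ m := by omega
  set gens := {x : R | ∃ (a : 𝓞 F) (l : R), a ∈ I ∧ P.degLT l m ∧
      x = modr (P.ι (algebraMap (𝓞 F) (𝓞 K) a) * l)} with hgens
  have hcoeff_red : ∀ (g : R) (n : ℕ),
      P'.coeff (red g) n = Ideal.Quotient.mk J (P.coeff g n) := by
    intro g n
    rw [hred, AddEquiv.apply_symm_apply, Finsupp.mapRange_apply]
  have red_zero : red 0 = 0 := by rw [hred]; simp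
  have red_add : ∀ g h : R, red (g + h) = red g + red h := by
    intro g h
    apply P'.coeff.injective
    ext n
    simp only [map_add, Finsupp.add_apply, hcoeff_red]
  have red_sum : ∀ (s : Finset ℕ) (h : ℕ → R),
      red (∑ i ∈ s, h i) = ∑ i ∈ s, red (h i) := by
    intro s h
    exact map_sum (AddMonoidHom.mk' red red_add) h s
  have red_mono : ∀ (a : 𝓞 K) (i : ℕ),
      red (P.ι a * P.t ^ i) = P'.ι (Ideal.Quotient.mk J a) * P'.t ^ i := by
    intro a i
    rw [hred, P.coeff_monomial, Finsupp.mapRange_single, P'.symm_single]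
  have red_t_mul : ∀ y : R, red (P.t * y) = P'.t * red y := by
    intro y
    induction y using P.basis_induction with
    | h0 => rw [mul_zero, red_zero, mul_zero]
    | hadd x y hx hy => rw [mul_add, red_add, hx, hy, red_add, mul_add]
    | hb b j =>
      have h1 : P.t * (P.ι b * P.t ^ j)
          = P.ι (σ₀ b) * P.t ^ (j + 1) + P.ι (δ₀ b) * P.t ^ j := by
        rw [← mul_assoc, P.t_comm, add_mul, mul_assoc, ← pow_succ']
      have h2 : P'.t * (P'.ι (Ideal.Quotient.mk J b) * P'.t ^ j)
          = P'.ι (σb (Ideal.Quotient.mk J b)) * P'.t ^ (j + 1)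
            + P'.ι (δb (Ideal.Quotient.mk J b)) * P'.t ^ j := by
        rw [← mul_assoc, P'.t_comm, add_mul, mul_assoc, ← pow_succ']
      rw [h1, red_add, red_mono, red_mono, red_mono, h2, hσb, hδb]
  have red_ι_mul : ∀ (a : 𝓞 K) (y : R),
      red (P.ι a * y) = P'.ι (Ideal.Quotient.mk J a) * red y := by
    intro a y
    induction y using P.basis_induction with
    | h0 => rw [mul_zero, red_zero, mul_zero]
    | hadd x y hx hy => rw [mul_add, red_add, hx, hy, red_add, mul_add]
    | hb b j =>
      rw [← mul_assoc, ← map_mul, red_mono, red_mono, map_mul, map_mul, mul_assoc]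
  have red_tpow_mul : ∀ (i : ℕ) (y : R), red (P.t ^ i * y) = P'.t ^ i * red y := by
    intro i
    induction i with
    | zero => intro y; rw [pow_zero, one_mul, pow_zero, one_mul]
    | succ i ih =>
      intro y
      rw [pow_succ, mul_assoc, ih, red_t_mul, pow_succ, mul_assoc]
  have red_mul : ∀ x y : R, red (x * y) = red x * red y := by
    intro x
    induction x using P.basis_induction with
    | h0 => intro y; rw [zero_mul, red_zero, zero_mul]
    | hadd x x' hx hx' => intro y; rw [add_mul, red_add, hx, hx', red_add, add_mul]
    | hb a i =>
      intro y
      rw [mul_assoc, red_ι_mul, red_tpow_mul, red_mono, mul_assoc]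
  have red_one : red 1 = 1 := by
    have h1 : (1 : R) = P.ι 1 * P.t ^ 0 := by simp
    rw [h1, red_mono]
    simp
  have red_degLT : ∀ g : R, P.degLT g m → P'.degLT (red g) m := by
    intro g hg n hn
    rw [hcoeff_red, hg n hn, map_zero]
  have red_ker : ∀ g : R, red g = 0 ↔ ∀ i, P.coeff g i ∈ J := by
    intro g
    constructor
    · intro h i
      rw [← Ideal.Quotient.eq_zero_iff_mem, ← hcoeff_red, h, map_zero,
        Finsupp.zero_apply]
    · intro h
      apply P'.coeff.injective
      ext n
      rw [hcoeff_red, map_zero, Finsupp.zero_apply, Ideal.Quotient.eq_zero_iff_mem]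
      exact h n
  have hf' : P'.MonicDeg (red f) m :=
    ⟨by rw [hcoeff_red, hf.1, map_one],
     fun i hi => by rw [hcoeff_red, hf.2 i hi, map_zero]⟩
  have hJalg : ∀ a : 𝓞 F, a ∈ I → algebraMap (𝓞 F) (𝓞 K) a ∈ J := by
    intro a ha; rw [hJ]; exact Ideal.mem_map_of_mem _ ha
  have part3 : ∀ g h : R, P.degLT g m → P.degLT h m →
      red (modr (g * h)) = modr' (red g * red h) := by
    intro g h hg hh
    obtain ⟨hd1, q, hq⟩ := hmodr (g * h)
    obtain ⟨hd2, q', hq'⟩ := hmodr' (red g * red h)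
    have e1 : red q * red f + red (modr (g * h))
        = q' * red f + modr' (red g * red h) := by
      rw [← red_mul q f, ← red_add, ← hq, red_mul]
      exact hq'
    have e2 : red (modr (g * h)) - modr' (red g * red h) = (q' - red q) * red f := by
      rw [sub_mul, sub_eq_sub_iff_add_eq_add]
      exact (add_comm _ _).trans e1
    have hdlt : P'.degLT ((q' - red q) * red f) m :=
      e2 ▸ P'.degLT_sub (red_degLT _ hd1) hd2
    have h0 := P'.mul_monic_eq_zero hm1 hf' hdlt
    rw [h0] at e2
    exact sub_eq_zero.mp e2
  have part1 : ∀ g : R, g ∈ AddSubgroup.closure gens ↔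
      (P.degLT g m ∧ ∀ i, P.coeff g i ∈ J) := by
    intro g
    constructor
    · intro hg
      let G : AddSubgroup R :=
        { carrier := {x : R | P.degLT x m ∧ ∀ i, P.coeff x i ∈ J}
          zero_mem' := ⟨P.degLT_zero m, fun i => by
            rw [map_zero, Finsupp.zero_apply]; exact J.zero_mem⟩
          add_mem' := fun {x y} hx hy => ⟨P.degLT_add hx.1 hy.1, fun i => by
            rw [map_add, Finsupp.add_apply]; exact J.add_mem (hx.2 i) (hy.2 i)⟩
          neg_mem' := fun {x} hx => ⟨P.degLT_neg hx.1, fun i => by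
            rw [map_neg, Finsupp.neg_apply]; exact J.neg_mem (hx.2 i)⟩ }
      have hsub : gens ⊆ (G : Set R) := by
        rintro x ⟨a, l, ha, hl, rfl⟩
        refine ⟨(hmodr _).1, ?_⟩
        have hw0 : red (P.ι (algebraMap (𝓞 F) (𝓞 K) a) * l) = 0 :=
          (red_ker _).mpr (fun i => by
            rw [P.coeff_ι_mul]; exact J.mul_mem_right _ (hJalg a ha))
        obtain ⟨hd, q, hqe⟩ := hmodr (P.ι (algebraMap (𝓞 F) (𝓞 K) a) * l)
        have hthis := congrArg red hqe
        rw [hw0, red_add, red_mul] at hthis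
        have e : red (modr (P.ι (algebraMap (𝓞 F) (𝓞 K) a) * l)) = (-red q) * red f := by
          rw [neg_mul]
          exact eq_neg_of_add_eq_zero_right hthis.symm
        have hz : (-red q) * red f = 0 :=
          P'.mul_monic_eq_zero hm1 hf' (e ▸ red_degLT _ hd)
        exact (red_ker _).mp (e.trans hz)
      exact (AddSubgroup.closure_le G).mpr hsub hg
    · rintro ⟨hdeg, hJm⟩
      have key : ∀ i, i < m → ∀ a ∈ J, P.ι a * P.t ^ i ∈ AddSubgroup.closure gens := by
        intro i him a ha
        have ha' : a ∈ Submodule.span (𝓞 K) ((algebraMap (𝓞 F) (𝓞 K)) '' ↑I) := by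
          rw [hJ] at ha; exact ha
        have main := Submodule.span_induction
          (p := fun x _ => ∀ c : 𝓞 K, P.ι (c * x) * P.t ^ i ∈ AddSubgroup.closure gens)
          ?_ ?_ ?_ ?_ ha'
        · simpa using main 1
        · rintro x ⟨b, hb, rfl⟩ c
          have hcomm : P.ι (c * algebraMap (𝓞 F) (𝓞 K) b) * P.t ^ i
              = P.ι (algebraMap (𝓞 F) (𝓞 K) b) * (P.ι c * P.t ^ i) := by
            rw [← mul_assoc, ← map_mul, mul_comm c]
          have hlt : P.degLT (P.ι c * P.t ^ i) m := fun n hn => by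
            rw [P.coeff_monomial, Finsupp.single_apply, if_neg (by omega)]
          have hdw : P.degLT (P.ι (algebraMap (𝓞 F) (𝓞 K) b) * (P.ι c * P.t ^ i)) m :=
            P.degLT_ι_mul _ hlt
          have hmodr_eq := P.modr_eq_self hm1 hf hmodr hdw
          rw [hcomm, ← hmodr_eq]
          exact AddSubgroup.subset_closure ⟨b, P.ι c * P.t ^ i, hb, hlt, rfl⟩
        · intro c
          rw [mul_zero, map_zero, zero_mul]
          exact zero_mem _
        · intro x y hx hy hxc hyc c
          rw [mul_add, map_add, add_mul]
          exact add_mem (hxc c) (hyc c)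
        · intro r x hx hxc c
          rw [smul_eq_mul, ← mul_assoc]
          exact hxc (c * r)
      have hgd := P.decomp g
      rw [hgd, Finsupp.sum]
      apply sum_mem
      intro i hi
      have him : i < m := by
        by_contra h'
        exact (Finsupp.mem_support_iff.mp hi) (hdeg i (by omega))
      exact key i him _ (hJm i)
  have part4b : ∀ y : R', P'.degLT y m → ∃ g : R, P.degLT g m ∧ red g = y := by
    intro y hy
    choose lift hlift using Ideal.Quotient.mk_surjective (I := J)
    refine ⟨(P'.coeff y).sum fun i b => P.ι (lift b) * P.t ^ i, ?_, ?_⟩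
    · rw [Finsupp.sum]
      apply P.degLT_sum
      intro i hi n hn
      have him : i < m := by
        by_contra h'
        exact (Finsupp.mem_support_iff.mp hi) (hy i (by omega))
      rw [P.coeff_monomial, Finsupp.single_apply, if_neg (by omega)]
    · rw [Finsupp.sum]
      refine (red_sum (P'.coeff y).support
        (fun a : ℕ => P.ι (lift ((P'.coeff y) a)) * P.t ^ a)).trans ?_
      conv_rhs => rw [P'.decomp y, Finsupp.sum]
      apply Finset.sum_congr rfl
      intro i hi
      rw [red_mono, hlift]
  exact ⟨part1, red_add, red_one, part3, red_degLT, part4b, fun g _ => red_ker g⟩
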